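/- Let Φ(A) = Σ_k V_k* A V_k be a unital map on n×n complex matrices. If A satisfies Φ(A*A) = Φ(A)*Φ(A) and Φ(AA*) = Φ(A)Φ(A)*, then A commutes with V_j V_k* for all j,k. -/
import Mathlib

open Matrix Finset

lemma aux_sum_zero {m n p : ℕ} (B : Fin m → Matrix (Fin p) (Fin n) ℂ)
    (h : ∑ k, (B k)ᴴ * B k = 0) : ∀ k, B k = 0 := by
  have key : ∀ (k : Fin m) (l : Fin p) (i : Fin n), B k l i = 0 := by
    intro k l i
    have h0 : (∑ k, (B k)ᴴ * B k) i i = 0 := by rw [h]; simp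
    have h1 : ∑ k, ∑ l, ((Complex.normSq (B k l i) : ℝ) : ℂ) = 0 := by
      simpa [Matrix.sum_apply, Matrix.mul_apply, Matrix.conjTranspose_apply,
        Complex.normSq_eq_conj_mul_self] using h0
    have h2 : ∑ k, ∑ l, Complex.normSq (B k l i) = 0 := by
      exact_mod_cast h1
    have h3 : ∀ k ∈ Finset.univ, ∀ l ∈ Finset.univ, Complex.normSq (B k l i) = 0 := by
      have := (Finset.sum_eq_zero_iff_of_nonneg (fun k _ =>
        Finset.sum_nonneg (fun l _ => Complex.normSq_nonneg _))).mp h2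
      intro k _ l _
      exact (Finset.sum_eq_zero_iff_of_nonneg (fun l _ => Complex.normSq_nonneg _)).mp
        (this k (Finset.mem_univ k)) l (Finset.mem_univ l)
    exact Complex.normSq_eq_zero.mp (h3 k (Finset.mem_univ k) l (Finset.mem_univ l))
  intro k
  ext l i
  simpa using key k l i

theorem stmt_3 {n m : ℕ} (V : Fin m → Matrix (Fin n) (Fin n) ℂ)
    (hV : ∑ k, (V k)ᴴ * V k = 1)
    (A : Matrix (Fin n) (Fin n) ℂ)
    (h1 : (∑ k, (V k)ᴴ * (Aᴴ * A) * V k)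
      = (∑ k, (V k)ᴴ * A * V k)ᴴ * (∑ k, (V k)ᴴ * A * V k))
    (h2 : (∑ k, (V k)ᴴ * (A * Aᴴ) * V k)
      = (∑ k, (V k)ᴴ * A * V k) * (∑ k, (V k)ᴴ * A * V k)ᴴ) :
    ∀ j k, A * (V j * (V k)ᴴ) = (V j * (V k)ᴴ) * A := by
  set Φ := ∑ k, (V k)ᴴ * A * V k with hΦ
  have hΦH : Φᴴ = ∑ k, (V k)ᴴ * Aᴴ * V k := by
    rw [hΦ, conjTranspose_sum]
    refine Finset.sum_congr rfl fun k _ => ?_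
    simp [Matrix.mul_assoc, conjTranspose_mul]
  -- Part 1: A * V k = V k * Φ
  have key1 : ∀ k, A * V k = V k * Φ := by
    have hz : ∑ k, (A * V k - V k * Φ)ᴴ * (A * V k - V k * Φ) = 0 := by
      have expand : ∀ k : Fin m, (A * V k - V k * Φ)ᴴ * (A * V k - V k * Φ)
          = (V k)ᴴ * (Aᴴ * A) * V k - ((V k)ᴴ * Aᴴ * V k) * Φ
            - Φᴴ * ((V k)ᴴ * A * V k) + Φᴴ * ((V k)ᴴ * V k) * Φ := by
        intro k
        simp only [conjTranspose_sub, conjTranspose_mul]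
        noncomm_ring
      rw [Finset.sum_congr rfl fun k _ => expand k]
      rw [Finset.sum_add_distrib, Finset.sum_sub_distrib, Finset.sum_sub_distrib, ← Finset.sum_mul,
        ← hΦH, h1, ← Finset.mul_sum, ← hΦ, ← Finset.sum_mul, ← Finset.mul_sum, hV,
        Matrix.mul_one]
      abel
    intro k
    have := aux_sum_zero _ hz k
    have : A * V k - V k * Φ = 0 := this
    linear_combination (norm := noncomm_ring) this
  -- Part 2: Aᴴ * V k = V k * Φᴴ, i.e. (V k)ᴴ * A = Φ * (V k)ᴴ
  have key2 : ∀ k, (V k)ᴴ * A = Φ * (V k)ᴴ := by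
    have hz : ∑ k, (Aᴴ * V k - V k * Φᴴ)ᴴ * (Aᴴ * V k - V k * Φᴴ) = 0 := by
      have expand : ∀ k : Fin m, (Aᴴ * V k - V k * Φᴴ)ᴴ * (Aᴴ * V k - V k * Φᴴ)
          = (V k)ᴴ * (A * Aᴴ) * V k - ((V k)ᴴ * A * V k) * Φᴴ
            - Φ * ((V k)ᴴ * Aᴴ * V k) + Φ * ((V k)ᴴ * V k) * Φᴴ := by
        intro k
        simp only [conjTranspose_sub, conjTranspose_mul, conjTranspose_conjTranspose]
        noncomm_ring
      rw [Finset.sum_congr rfl fun k _ => expand k]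
      rw [Finset.sum_add_distrib, Finset.sum_sub_distrib, Finset.sum_sub_distrib, ← Finset.sum_mul,
        ← hΦ, h2, ← Finset.mul_sum, ← hΦH, ← Finset.sum_mul, ← Finset.mul_sum, hV,
        Matrix.mul_one]
      abel
    intro k
    have h0 : Aᴴ * V k - V k * Φᴴ = 0 := aux_sum_zero _ hz k
    have h0' : Aᴴ * V k = V k * Φᴴ := by linear_combination (norm := noncomm_ring) h0
    calc (V k)ᴴ * A = (Aᴴ * V k)ᴴ := by simp [conjTranspose_mul]
    _ = (V k * Φᴴ)ᴴ := by rw [h0']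
    _ = Φ * (V k)ᴴ := by simp [conjTranspose_mul]
  intro j k
  calc A * (V j * (V k)ᴴ) = (A * V j) * (V k)ᴴ := by rw [Matrix.mul_assoc]
  _ = V j * (Φ * (V k)ᴴ) := by rw [key1 j, Matrix.mul_assoc]
  _ = V j * ((V k)ᴴ * A) := by rw [key2 k]
  _ = (V j * (V k)ᴴ) * A := by rw [Matrix.mul_assoc]
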